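/- Let G = A ∗ B be a free product with A and B nontrivial, and let φ be an automorphism of G preserving the subgroup A and preserving the conjugacy class of B. Then there exists b₀ ∈ G such that the automorphism ad_{b₀} ∘ φ preserves both A and B. -/

import Mathlib

set_option linter.unusedSectionVars false

/-
An automorphism of a free product `A ∗ B` preserving the factor `A` and the conjugacy
class of `B` can be composed with an inner automorphism so that it preserves both factors.

The key combinatorial fact (proved via the normal-form machinery of `Monoid.CoprodI`):
if `A` together with `g B g⁻¹` generate the whole free product, then `g = a * b` with
`a ∈ A`, `b ∈ B`.
-/

open Monoid

namespace Stmt17Aux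

section conj


variable {G : Type*} [Group G]

theorem map_conj_map_conj (u v : G) (K : Subgroup G) :
    Subgroup.map (MulAut.conj u).toMonoidHom (Subgroup.map (MulAut.conj v).toMonoidHom K)
      = Subgroup.map (MulAut.conj (u * v)).toMonoidHom K := by
  rw [Subgroup.map_map]
  congr 1
  ext x
  simp [mul_assoc]

theorem map_conj_self {u : G} {K : Subgroup G} (hu : u ∈ K) :
    Subgroup.map (MulAut.conj u).toMonoidHom K = K := by
  ext x
  constructor
  · rintro ⟨y, hy, rfl⟩
    simpa using mul_mem (mul_mem hu hy) (inv_mem hu)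
  · intro hx
    refine ⟨u⁻¹ * x * u, mul_mem (mul_mem (inv_mem hu) hx) hu, ?_⟩
    simp [MulAut.conj_apply, mul_assoc]

theorem map_conj_top (u : G) :
    Subgroup.map (MulAut.conj u).toMonoidHom (⊤ : Subgroup G) = ⊤ :=
  Subgroup.map_top_of_surjective _ (MulAut.conj u).surjective

end conj


section words
variable {ι : Type*} [DecidableEq ι] {M : ι → Type*} [∀ i, Group (M i)]
  [∀ i, DecidableEq (M i)]

theorem neWord_smul_toList :
    ∀ {i j} (w : CoprodI.NeWord M i j) (u : CoprodI.Word M), u.fstIdx ≠ some j →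
      (w.prod • u).toList = w.toList ++ u.toList := by
  intro i j w
  induction w with
  | singleton x hx =>
    intro u hu
    rw [CoprodI.NeWord.prod_singleton, ← CoprodI.Word.cons_eq_smul (h1 := hu) (h2 := hx)]
    rfl
  | append w₁ hne w₂ ih₁ ih₂ =>
    intro u hu
    rename_i i j k l
    rw [CoprodI.NeWord.append_prod, mul_smul]
    have h2 := ih₂ u hu
    have hfst : (w₂.prod • u).fstIdx = some k := by
      rw [CoprodI.Word.fstIdx, h2]
      rcases hnil : w₂.toList with _ | ⟨x, t⟩
      · exact absurd hnil w₂.toList_ne_nil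
      · have := w₂.toList_head?
        rw [hnil] at this
        simp only [List.head?_cons, Option.some.injEq] at this
        subst this
        simp
    have := ih₁ (w₂.prod • u) (by rw [hfst]; simp; exact fun h => hne h.symm)
    rw [this, h2]
    simp


end words
section ping
variable {M : Bool → Type*} [∀ i, Group (M i)] [∀ i, DecidableEq (M i)]

/-- The family of maps used to generate `⟨A, gBg⁻¹⟩`. -/

def pingF (g : CoprodI M) : ∀ i : Bool, M i →* CoprodI M := fun i =>
  match i with
  | true => CoprodI.of
  | false => (MulAut.conj g).toMonoidHom.comp CoprodI.of

theorem pingF_true (g : CoprodI M) (x : M true) : pingF g true x = CoprodI.of x := rfl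

theorem pingF_true' (g : CoprodI M) : pingF g true = (CoprodI.of : M true →* _) := rfl

theorem pingF_false' (g : CoprodI M) :
    pingF g false = (MulAut.conj g).toMonoidHom.comp (CoprodI.of : M false →* _) := rfl

theorem pingF_false (g : CoprodI M) (x : M false) :
    pingF g false x = g * CoprodI.of x * g⁻¹ := rfl

theorem ping (g : CoprodI M) (wg : CoprodI.NeWord M false true) (hwg : wg.prod = g) :
    ∀ {i j} (w : CoprodI.NeWord M i j) (u : CoprodI.Word M), u.fstIdx ≠ some j →
      (CoprodI.lift (pingF g) w.prod • u).fstIdx = some i ∧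
        (i = false → 3 ≤ (CoprodI.lift (pingF g) w.prod • u).toList.length) := by
  intro i j w
  induction w with
  | singleton x hx =>
    rename_i i
    intro u hu
    rw [CoprodI.NeWord.prod_singleton, CoprodI.lift_of]
    cases i with
    | true =>
      rw [pingF_true, ← CoprodI.Word.cons_eq_smul (h1 := hu) (h2 := hx)]
      simp
    | false =>
      rw [pingF_false]
      set cw : CoprodI.NeWord M false false :=
        CoprodI.NeWord.append (CoprodI.NeWord.append wg (by simp) (.singleton x hx))
          (by simp) wg.inv with hcw
      have hprod : cw.prod = g * CoprodI.of x * g⁻¹ := by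
        simp [hcw, hwg]
      have hlist := neWord_smul_toList cw u hu
      rw [← hprod]
      constructor
      · rw [CoprodI.Word.fstIdx, hlist]
        rcases hnil : cw.toList with _ | ⟨y, t⟩
        · exact absurd hnil cw.toList_ne_nil
        · have := cw.toList_head?
          rw [hnil] at this
          simp only [List.head?_cons, Option.some.injEq] at this
          subst this
          simp
      · intro _
        rw [hlist]
        have h1 : wg.toList.length ≠ 0 := by
          simpa using wg.toList_ne_nil
        have h2 : wg.inv.toList.length ≠ 0 := by
          simpa using wg.inv.toList_ne_nil
        simp only [hcw, CoprodI.NeWord.toList, List.length_append, List.length_singleton]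
        omega
  | append w₁ hne w₂ ih₁ ih₂ =>
    rename_i i j k l
    intro u hu
    have h2 := ih₂ u hu
    have hfst : (CoprodI.lift (pingF g) w₂.prod • u).fstIdx ≠ some j := by
      rw [h2.1]; simp; exact fun h => hne h.symm
    have h1 := ih₁ (CoprodI.lift (pingF g) w₂.prod • u) hfst
    rw [CoprodI.NeWord.append_prod, map_mul, mul_smul]
    exact h1



variable {M : Bool → Type*} [∀ i, Group (M i)] [∀ i, DecidableEq (M i)]

end ping

section core
variable {M : Bool → Type*} [∀ i, Group (M i)] [∀ i, DecidableEq (M i)]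

theorem equiv_symm_eq (w : CoprodI.Word M) :
    (CoprodI.Word.equiv (M := M)).symm w = w.prod := rfl

theorem prod_equiv (g : CoprodI M) : (CoprodI.Word.equiv g).prod = g :=
  (CoprodI.Word.equiv (M := M)).symm_apply_apply g

theorem equiv_prod (w : CoprodI.Word M) : CoprodI.Word.equiv w.prod = w := by
  rw [← equiv_symm_eq, Equiv.apply_symm_apply]

theorem word_prod_eq (w : CoprodI.Word M) :
    w.prod = (w.toList.map fun l => CoprodI.of l.snd).prod := rfl

theorem core : ∀ (n : ℕ) (g : CoprodI M),
    (CoprodI.Word.equiv g).toList.length ≤ n →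
    ((CoprodI.of : M true →* _).range ⊔
      Subgroup.map (MulAut.conj g).toMonoidHom (CoprodI.of : M false →* _).range = ⊤) →
    ∃ (a : M true) (b : M false), g = CoprodI.of a * CoprodI.of b := by
  intro n
  induction n with
  | zero =>
    intro g hlen _
    have h0 : (CoprodI.Word.equiv g).toList = [] := List.length_eq_zero_iff.mp (Nat.le_zero.mp hlen)
    have hg : g = 1 := by
      have := prod_equiv g
      rw [word_prod_eq, h0] at this
      simpa using this.symm
    exact ⟨1, 1, by simp [hg]⟩
  | succ n ih =>
    intro g hlen hsup
    by_cases h0 : (CoprodI.Word.equiv g).toList = []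
    · have hg : g = 1 := by
        have := prod_equiv g
        rw [word_prod_eq, h0] at this
        simpa using this.symm
      exact ⟨1, 1, by simp [hg]⟩
    rcases hx : (CoprodI.Word.equiv g).toList.head h0 with ⟨i, m⟩
    have hl : (CoprodI.Word.equiv g).toList
        = ⟨i, m⟩ :: (CoprodI.Word.equiv g).toList.tail := by
      rw [← hx, List.cons_head_tail]
    cases i with
    | true =>
      have hm1 : m ≠ 1 := (CoprodI.Word.equiv g).ne_one ⟨true, m⟩
        (by rw [hl]; exact List.mem_cons_self)
      set u : CoprodI.Word M :=
        ⟨(CoprodI.Word.equiv g).toList.tail,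
          fun x hx' => (CoprodI.Word.equiv g).ne_one x (List.mem_of_mem_tail hx'),
          (CoprodI.Word.equiv g).chain_ne.tail⟩ with hu
      have hg : g = CoprodI.of m * u.prod := by
        conv_lhs => rw [← prod_equiv g]
        rw [word_prod_eq, word_prod_eq]
        conv_lhs => rw [hl]
        simp [hu]
      have hgm : (CoprodI.of m)⁻¹ * g = u.prod := by rw [hg]; group
      have hmem : (CoprodI.of m)⁻¹ ∈ (CoprodI.of : M true →* _).range := ⟨m⁻¹, by simp⟩
      have hsup' : (CoprodI.of : M true →* _).range ⊔
          Subgroup.map (MulAut.conj u.prod).toMonoidHom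
            (CoprodI.of : M false →* _).range = ⊤ := by
        have h2 := congrArg (Subgroup.map (MulAut.conj (CoprodI.of m)⁻¹).toMonoidHom) hsup
        rw [Subgroup.map_sup, map_conj_map_conj, hgm, map_conj_self hmem, map_conj_top] at h2
        exact h2
      have hlen' : (CoprodI.Word.equiv u.prod).toList.length ≤ n := by
        rw [equiv_prod]
        have h3 : (CoprodI.Word.equiv g).toList.length ≤ n + 1 := hlen
        rw [hl] at h3
        simpa [hu] using Nat.le_of_succ_le_succ h3
      obtain ⟨a, b, hab⟩ := ih u.prod hlen' hsup'
      exact ⟨m * a, b, by rw [hg, hab, map_mul, mul_assoc]⟩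
    | false =>
      rcases hy : (CoprodI.Word.equiv g).toList.getLast h0 with ⟨j, m'⟩
      cases j with
      | false =>
        set u : CoprodI.Word M :=
          ⟨(CoprodI.Word.equiv g).toList.dropLast,
            fun x hx' => (CoprodI.Word.equiv g).ne_one x
              ((List.dropLast_sublist _).subset hx'),
            (CoprodI.Word.equiv g).chain_ne.prefix (List.dropLast_prefix _)⟩ with hu
        have hm'1 : m' ≠ 1 := (CoprodI.Word.equiv g).ne_one ⟨false, m'⟩
          (by rw [← hy]; exact List.getLast_mem h0)
        have hl2 : (CoprodI.Word.equiv g).toList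
            = (CoprodI.Word.equiv g).toList.dropLast ++ [⟨false, m'⟩] := by
          conv_lhs => rw [← List.dropLast_append_getLast h0]
          rw [hy]
        have hg : g = u.prod * CoprodI.of m' := by
          conv_lhs => rw [← prod_equiv g]
          rw [word_prod_eq, word_prod_eq]
          conv_lhs => rw [hl2]
          simp [hu]
        have hconj : Subgroup.map (MulAut.conj g).toMonoidHom
            (CoprodI.of : M false →* _).range
            = Subgroup.map (MulAut.conj u.prod).toMonoidHom
              (CoprodI.of : M false →* _).range := by
          rw [hg, ← map_conj_map_conj, map_conj_self (show CoprodI.of m' ∈ (CoprodI.of : M false →* _).range from ⟨m', rfl⟩)]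
        rw [hconj] at hsup
        have hlen' : (CoprodI.Word.equiv u.prod).toList.length ≤ n := by
          rw [equiv_prod]
          have h3 : (CoprodI.Word.equiv g).toList.length ≤ n + 1 := hlen
          have h4 : (CoprodI.Word.equiv g).toList.length ≠ 0 := by
            simpa using h0
          simp only [hu, List.length_dropLast]
          omega
        obtain ⟨a, b, hab⟩ := ih u.prod hlen' hsup
        exact ⟨a, b * m', by rw [hg, hab, map_mul, mul_assoc]⟩
      | true =>
        exfalso
        have hne : CoprodI.Word.equiv g ≠ CoprodI.Word.empty := by
          intro h; apply h0; rw [h]; rfl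
        obtain ⟨i', j', w', hw'⟩ := CoprodI.NeWord.of_word _ hne
        have hlist : w'.toList = (CoprodI.Word.equiv g).toList :=
          congrArg CoprodI.Word.toList hw'
        have hhead : w'.toList.head? = some ⟨false, m⟩ := by
          rw [hlist, List.head?_eq_head h0, hx]
        have hlast : w'.toList.getLast? = some ⟨true, m'⟩ := by
          rw [hlist, List.getLast?_eq_getLast_of_ne_nil h0, hy]
        have hi' : i' = false := by
          have h5 := Option.some.inj ((w'.toList_head?).symm.trans hhead)
          exact congrArg Sigma.fst h5
        have hj' : j' = true := by
          have h5 := Option.some.inj ((w'.toList_getLast?).symm.trans hlast)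
          exact congrArg Sigma.fst h5
        subst hi'; subst hj'
        have hprod : w'.prod = g := by
          rw [show w'.prod = w'.toWord.prod from rfl, hw', prod_equiv]
        have hrange : (CoprodI.lift (pingF g)).range = ⊤ := by
          rw [CoprodI.range_eq_iSup, iSup_bool_eq, pingF_true', pingF_false',
            MonoidHom.range_comp]
          exact hsup
        have hm1 : m ≠ 1 := (CoprodI.Word.equiv g).ne_one ⟨false, m⟩
          (by rw [hl]; exact List.mem_cons_self)
        obtain ⟨y, hy2⟩ : CoprodI.of m ∈ (CoprodI.lift (pingF g)).range := by
          rw [hrange]; trivial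
        have hy1 : y ≠ 1 := by
          rintro rfl
          rw [map_one] at hy2
          exact hm1 (CoprodI.of_injective false (by rw [map_one, ← hy2]))
        have hyne : CoprodI.Word.equiv y ≠ CoprodI.Word.empty := by
          intro h
          apply hy1
          have h6 := prod_equiv y
          rw [h] at h6
          simpa using h6.symm
        obtain ⟨i2, j2, w2, hw2⟩ := CoprodI.NeWord.of_word _ hyne
        have hprod2 : w2.prod = y := by
          rw [show w2.prod = w2.toWord.prod from rfl, hw2, prod_equiv]
        have hping := ping g w' hprod w2 CoprodI.Word.empty
          (by simp [CoprodI.Word.fstIdx])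
        rw [hprod2, hy2] at hping
        have hcons : CoprodI.of m • (CoprodI.Word.empty : CoprodI.Word M) =
            CoprodI.Word.cons m CoprodI.Word.empty (by simp [CoprodI.Word.fstIdx]) hm1 :=
          CoprodI.Word.cons_eq_smul.symm
        rw [hcons] at hping
        cases i2 with
        | true => simpa using hping.1
        | false =>
          have h7 := hping.2 rfl
          simp [CoprodI.Word.cons] at h7



end core

section transfer
universe u v

/-- The `Bool`-indexed family `⟨A, B⟩` (with `true ↦ A`). -/
def MM (A : Type u) (B : Type v) : Bool → Type (max u v) :=
  fun b => Bool.rec (ULift B) (ULift A) b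

instance (A : Type u) (B : Type v) [Group A] [Group B] : ∀ b, Group (MM A B b) :=
  fun b => Bool.rec (inferInstanceAs (Group (ULift B))) (inferInstanceAs (Group (ULift A))) b

variable {A : Type u} {B : Type v} [Group A] [Group B]

def toI : Monoid.Coprod A B →* CoprodI (MM A B) :=
  Monoid.Coprod.lift
    ((CoprodI.of (M := MM A B) (i := true)).comp (MulEquiv.ulift.symm.toMonoidHom))
    ((CoprodI.of (M := MM A B) (i := false)).comp (MulEquiv.ulift.symm.toMonoidHom))

def fromI : CoprodI (MM A B) →* Monoid.Coprod A B :=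
  CoprodI.lift fun b =>
    Bool.rec (motive := fun b => MM A B b →* Monoid.Coprod A B)
      ((Monoid.Coprod.inr (M := A)).comp MulEquiv.ulift.toMonoidHom)
      ((Monoid.Coprod.inl (N := B)).comp MulEquiv.ulift.toMonoidHom) b

theorem fromI_toI : (fromI (A := A) (B := B)).comp toI = MonoidHom.id _ := by
  apply Monoid.Coprod.hom_ext <;> ext x <;>
  · simp only [toI, fromI, MonoidHom.comp_apply, Monoid.Coprod.lift_apply_inl,
      Monoid.Coprod.lift_apply_inr, CoprodI.lift_of, MonoidHom.id_apply]
    rfl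

theorem toI_fromI : (toI (A := A) (B := B)).comp fromI = MonoidHom.id _ := by
  apply CoprodI.ext_hom
  intro i
  cases i <;> ext x <;>
  · simp only [toI, fromI, MonoidHom.comp_apply, Monoid.Coprod.lift_apply_inl,
      Monoid.Coprod.lift_apply_inr, CoprodI.lift_of, MonoidHom.id_apply]
    rfl

def eAB : Monoid.Coprod A B ≃* CoprodI (MM A B) :=
  MonoidHom.toMulEquiv toI fromI fromI_toI toI_fromI

theorem coreC (g : Monoid.Coprod A B)
    (h : (Monoid.Coprod.inl : A →* Monoid.Coprod A B).range ⊔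
      Subgroup.map (MulAut.conj g).toMonoidHom
        (Monoid.Coprod.inr : B →* Monoid.Coprod A B).range = ⊤) :
    ∃ (a : A) (b : B), g = Monoid.Coprod.inl a * Monoid.Coprod.inr b := by
  classical
  letI : ∀ i, DecidableEq (MM A B i) := fun i => Classical.decEq _
  set e := (eAB : Monoid.Coprod A B ≃* CoprodI (MM A B)) with he
  have hmapinl : Subgroup.map e.toMonoidHom (Monoid.Coprod.inl : A →* _).range
      = (CoprodI.of : MM A B true →* _).range := by
    rw [← MonoidHom.range_comp]
    have h1 : e.toMonoidHom.comp (Monoid.Coprod.inl : A →* _)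
        = (CoprodI.of (M := MM A B) (i := true)).comp (MulEquiv.ulift.symm.toMonoidHom) := rfl
    rw [h1, MonoidHom.range_comp,
      MonoidHom.range_eq_top_of_surjective _ (MulEquiv.ulift.symm.surjective),
      ← MonoidHom.range_eq_map]
  have hmapinr : Subgroup.map e.toMonoidHom (Monoid.Coprod.inr : B →* _).range
      = (CoprodI.of : MM A B false →* _).range := by
    rw [← MonoidHom.range_comp]
    have h1 : e.toMonoidHom.comp (Monoid.Coprod.inr : B →* _)
        = (CoprodI.of (M := MM A B) (i := false)).comp (MulEquiv.ulift.symm.toMonoidHom) := rfl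
    rw [h1, MonoidHom.range_comp,
      MonoidHom.range_eq_top_of_surjective _ (MulEquiv.ulift.symm.surjective),
      ← MonoidHom.range_eq_map]
  have hconjcomm : e.toMonoidHom.comp (MulAut.conj g).toMonoidHom
      = (MulAut.conj (e g)).toMonoidHom.comp e.toMonoidHom := by
    ext x <;>
      simp [MulAut.conj_apply, map_mul, MulEquiv.coe_toMonoidHom]
  have h2 := congrArg (Subgroup.map e.toMonoidHom) h
  rw [Subgroup.map_sup, hmapinl, Subgroup.map_map, hconjcomm, ← Subgroup.map_map,
    hmapinr, Subgroup.map_top_of_surjective e.toMonoidHom e.surjective] at h2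
  obtain ⟨a', b', hab⟩ := @core (MM A B) _ _ _ (e g) le_rfl h2
  have hg := congrArg e.symm hab
  rw [e.symm_apply_apply, map_mul] at hg
  refine ⟨a'.down, b'.down, ?_⟩
  rw [hg]
  have ha : e.symm (CoprodI.of a') = Monoid.Coprod.inl a'.down := by
    show fromI (CoprodI.of a') = _
    simp only [fromI, CoprodI.lift_of]
    rfl
  have hb : e.symm (CoprodI.of b') = Monoid.Coprod.inr b'.down := by
    show fromI (CoprodI.of b') = _
    simp only [fromI, CoprodI.lift_of]
    rfl
  rw [ha, hb]



end transfer

theorem map_mulAut_mul {G : Type*} [Group G] (ψ χ : MulAut G) (S : Subgroup G) :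
    Subgroup.map (ψ * χ).toMonoidHom S
      = Subgroup.map ψ.toMonoidHom (Subgroup.map χ.toMonoidHom S) := by
  rw [Subgroup.map_map]
  rfl


end Stmt17Aux

open Stmt17Aux in
/-- If an automorphism of a free product `A ∗ B` preserves the factor `A` and preserves the
conjugacy class of the factor `B`, then after composing with an inner automorphism it
preserves both factors. -/
theorem stmt17 {A B : Type*} [Group A] [Group B] [Nontrivial A] [Nontrivial B]
    (φ : MulAut (Monoid.Coprod A B))
    (hA : Subgroup.map φ.toMonoidHom (Monoid.Coprod.inl : A →* Monoid.Coprod A B).range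
      = (Monoid.Coprod.inl : A →* Monoid.Coprod A B).range)
    (hB : ∃ g : Monoid.Coprod A B,
      Subgroup.map φ.toMonoidHom (Monoid.Coprod.inr : B →* Monoid.Coprod A B).range
        = Subgroup.map (MulAut.conj g).toMonoidHom
            (Monoid.Coprod.inr : B →* Monoid.Coprod A B).range) :
    ∃ b₀ : Monoid.Coprod A B,
      Subgroup.map (MulAut.conj b₀ * φ : MulAut (Monoid.Coprod A B)).toMonoidHom
          (Monoid.Coprod.inl : A →* Monoid.Coprod A B).range
        = (Monoid.Coprod.inl : A →* Monoid.Coprod A B).range ∧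
      Subgroup.map (MulAut.conj b₀ * φ : MulAut (Monoid.Coprod A B)).toMonoidHom
          (Monoid.Coprod.inr : B →* Monoid.Coprod A B).range
        = (Monoid.Coprod.inr : B →* Monoid.Coprod A B).range := by
  obtain ⟨g, hBg⟩ := hB
  have htop : (Monoid.Coprod.inl : A →* Monoid.Coprod A B).range ⊔
      Subgroup.map (MulAut.conj g).toMonoidHom
        (Monoid.Coprod.inr : B →* Monoid.Coprod A B).range = ⊤ := by
    have h1 := congrArg (Subgroup.map φ.toMonoidHom)
      (Monoid.Coprod.range_inl_sup_range_inr (G := A) (H := B))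
    rw [Subgroup.map_sup, hA, hBg,
      Subgroup.map_top_of_surjective φ.toMonoidHom φ.surjective] at h1
    exact h1
  obtain ⟨a, b, hg⟩ := coreC g htop
  have hBa : Subgroup.map φ.toMonoidHom (Monoid.Coprod.inr : B →* Monoid.Coprod A B).range
      = Subgroup.map (MulAut.conj (Monoid.Coprod.inl a)).toMonoidHom
          (Monoid.Coprod.inr : B →* Monoid.Coprod A B).range := by
    rw [hBg, hg, ← map_conj_map_conj,
      map_conj_self (show (Monoid.Coprod.inr b : Monoid.Coprod A B)
        ∈ (Monoid.Coprod.inr : B →* Monoid.Coprod A B).range from ⟨b, rfl⟩)]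
  refine ⟨(Monoid.Coprod.inl a)⁻¹, ?_, ?_⟩
  · rw [map_mulAut_mul, hA,
      map_conj_self (show (Monoid.Coprod.inl a)⁻¹
        ∈ (Monoid.Coprod.inl : A →* Monoid.Coprod A B).range from inv_mem ⟨a, rfl⟩)]
  · rw [map_mulAut_mul, hBa, map_conj_map_conj, inv_mul_cancel, map_one]
    exact Subgroup.map_id _
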